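/- For any simple graph G with at least one vertex, q_N(G;0) = 0. -/

import Mathlib

open Matrix LinearMap Module

section BlockRank
variable {K : Type*} [Field K]

lemma myrange_prodMap {M N M' N' : Type*} [AddCommGroup M] [AddCommGroup N] [AddCommGroup M'] [AddCommGroup N']
    [Module K M] [Module K N] [Module K M'] [Module K N']
    (f : M →ₗ[K] M') (g : N →ₗ[K] N') :
    LinearMap.range (f.prodMap g) = (LinearMap.range f).prod (LinearMap.range g) := by
  ext ⟨x, y⟩
  simp only [LinearMap.mem_range, Submodule.mem_prod]
  constructor
  · rintro ⟨⟨a, b⟩, h⟩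
    exact ⟨⟨a, congrArg Prod.fst h⟩, ⟨b, congrArg Prod.snd h⟩⟩
  · rintro ⟨⟨a, ha⟩, ⟨b, hb⟩⟩
    exact ⟨(a, b), Prod.ext ha hb⟩

noncomputable def subProdEquiv {M N : Type*} [AddCommGroup M] [AddCommGroup N] [Module K M] [Module K N]
    (p : Submodule K M) (q : Submodule K N) : (p.prod q) ≃ₗ[K] p × q where
  toFun x := (⟨x.1.1, x.2.1⟩, ⟨x.1.2, x.2.2⟩)
  invFun x := ⟨(x.1.1, x.2.1), ⟨x.1.2, x.2.2⟩⟩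
  map_add' _ _ := rfl
  map_smul' _ _ := rfl
  left_inv _ := rfl
  right_inv _ := rfl

lemma finrank_sub_prod {M N : Type*} [AddCommGroup M] [AddCommGroup N] [Module K M] [Module K N]
    [FiniteDimensional K M] [FiniteDimensional K N]
    (p : Submodule K M) (q : Submodule K N) :
    finrank K (p.prod q) = finrank K p + finrank K q := by
  rw [(subProdEquiv p q).finrank_eq, Module.finrank_prod]

lemma rank_fromBlocks_diag {m n : Type*} [Fintype m] [Fintype n] [DecidableEq m] [DecidableEq n]
    (A : Matrix m m K) (D : Matrix n n K) :
    (Matrix.fromBlocks A 0 0 D).rank = A.rank + D.rank := by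
  classical
  set e := LinearEquiv.sumArrowLequivProdArrow m n K K with he
  have hM : (Matrix.fromBlocks A 0 0 D).mulVecLin
      = (e.symm.toLinearMap ∘ₗ (A.mulVecLin.prodMap D.mulVecLin)) ∘ₗ e.toLinearMap := by
    apply LinearMap.ext
    intro x
    funext k
    cases k <;>
      simp [he, Matrix.mulVecLin_apply, Matrix.fromBlocks_mulVec,
        LinearEquiv.sumArrowLequivProdArrow, Equiv.sumArrowEquivProdArrow, Function.comp]
  rw [Matrix.rank, Matrix.rank, Matrix.rank, hM]
  rw [LinearMap.range_comp_of_range_eq_top _ e.range]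
  rw [LinearMap.range_comp, myrange_prodMap]
  rw [LinearEquiv.finrank_map_eq, finrank_sub_prod]

end BlockRank

lemma zmod2_add_self : ∀ x : ZMod 2, x + x = 0 := by decide

universe u

lemma matrix_add_self {a b : Type*} (M : Matrix a b (ZMod 2)) : M + M = 0 := by
  ext x y
  exact zmod2_add_self _

lemma even_rank_alt : ∀ (n : ℕ), ∀ (ι : Type u) [Fintype ι] [DecidableEq ι],
    Fintype.card ι ≤ n → ∀ (A : Matrix ι ι (ZMod 2)), Aᵀ = A → (∀ i, A i i = 0) →
    Even A.rank := by
  intro n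
  induction n with
  | zero =>
    intro ι _ _ hcard A _ _
    have h1 : A.rank ≤ 0 := le_trans (A.rank_le_card_width) hcard
    simp [Nat.le_zero.mp h1]
  | succ n ih =>
    intro ι _ _ hcard A hsym hdiag
    by_cases hA : A = 0
    · simp [hA]
    · -- find a nonzero entry
      have : ∃ i j, A i j ≠ 0 := by
        by_contra hc
        push_neg at hc
        exact hA (by ext i j; simp [hc i j])
      obtain ⟨i, j, hij⟩ := this
      have hAsymm : ∀ x y, A x y = A y x := fun x y => by
        conv_lhs => rw [← hsym]
        rfl
      have hij1 : A i j = 1 := by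
        have : ∀ x : ZMod 2, x ≠ 0 → x = 1 := by decide
        exact this _ hij
      have hne : i ≠ j := fun hcon => hij (hcon ▸ hdiag i)
      -- build the equivalence
      set s := {k : ι // k ≠ i ∧ k ≠ j} with hs
      let e : (Fin 2 ⊕ s) ≃ ι :=
        { toFun := Sum.elim ![i, j] (fun k => k.1)
          invFun := fun k => if h1 : k = i then Sum.inl 0 else if h2 : k = j then Sum.inl 1
            else Sum.inr ⟨k, h1, h2⟩
          left_inv := by
            rintro (a | ⟨k, h1, h2⟩)
            · fin_cases a
              · simp
              · simp [hne.symm]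
            · simp [h1, h2]
          right_inv := by
            intro k
            by_cases h1 : k = i
            · simp [h1]
            · by_cases h2 : k = j
              · simp [h1, h2, Ne.symm hne]
              · simp [h1, h2] }
      have hcards : Fintype.card ι = 2 + Fintype.card s := by
        rw [← Fintype.card_congr e, Fintype.card_sum, Fintype.card_fin]
      set A' := A.submatrix e e with hA'
      have hrankA' : A'.rank = A.rank := A.rank_submatrix e e
      have hA'symm : ∀ x y, A' x y = A' y x := fun x y => hAsymm _ _
      have hA'diag : ∀ x, A' x x = 0 := fun x => hdiag _
      set B := A'.toBlocks₁₁ with hBdef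
      set C := A'.toBlocks₁₂ with hCdef
      have hB : B = !![0, 1; 1, 0] := by
        have h00 : A' (Sum.inl 0) (Sum.inl 0) = 0 := hA'diag _
        have h11 : A' (Sum.inl 1) (Sum.inl 1) = 0 := hA'diag _
        have h01 : A' (Sum.inl 0) (Sum.inl 1) = 1 := by
          show A (e (Sum.inl 0)) (e (Sum.inl 1)) = 1
          simpa [e] using hij1
        have h10 : A' (Sum.inl 1) (Sum.inl 0) = 1 := by rw [hA'symm]; exact h01
        ext a b
        fin_cases a <;> fin_cases b <;>
          simp [hBdef, Matrix.toBlocks₁₁, h00, h01, h10, h11]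
      have hA21 : A'.toBlocks₂₁ = Cᵀ := by
        ext k a
        show A' (Sum.inr k) (Sum.inl a) = A' (Sum.inl a) (Sum.inr k)
        exact hA'symm _ _
      have hE : A'.toBlocks₂₂ᵀ = A'.toBlocks₂₂ := by
        ext k l
        exact hA'symm _ _
      set E := A'.toBlocks₂₂ with hEdef
      have hBB : B * B = 1 := by
        rw [hB]
        ext a b
        fin_cases a <;> fin_cases b <;>
          simp [Matrix.mul_apply, Fin.sum_univ_two]
      have hBsym : Bᵀ = B := by rw [hB]; ext a b; fin_cases a <;> fin_cases b <;> rfl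
      have hunitB : IsUnit B := ⟨⟨B, B, hBB, hBB⟩, rfl⟩
      -- the transformation
      set X := Cᵀ * B with hX
      set P := Matrix.fromBlocks (1 : Matrix (Fin 2) (Fin 2) (ZMod 2)) (0 : Matrix (Fin 2) s (ZMod 2)) X (1 : Matrix s s (ZMod 2)) with hP
      have hPP : P * P = 1 := by
        rw [hP, Matrix.fromBlocks_multiply]
        simp only [Matrix.mul_one, Matrix.one_mul, Matrix.mul_zero, Matrix.zero_mul,
          add_zero, zero_add]
        rw [show X + X = 0 by ext k a; exact zmod2_add_self _]
        exact Matrix.fromBlocks_one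
      have hPdet : IsUnit P.det := by
        have := congrArg Matrix.det hPP
        rw [Matrix.det_mul, Matrix.det_one] at this
        exact IsUnit.of_mul_eq_one _ this
      set S := X * C + E with hS
      have hdecomp : P * A' * Pᵀ = Matrix.fromBlocks B 0 0 S := by
        have hA'blocks : A' = Matrix.fromBlocks B C Cᵀ E := by
          rw [← hA21, hBdef, hCdef, hEdef, Matrix.fromBlocks_toBlocks]
        rw [hA'blocks, hP, Matrix.fromBlocks_transpose, Matrix.transpose_one,
          Matrix.transpose_zero, Matrix.fromBlocks_multiply, Matrix.fromBlocks_multiply]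
        have hXB : X * B = Cᵀ := by rw [hX, Matrix.mul_assoc, hBB, Matrix.mul_one]
        have hXt : Xᵀ = B * C := by
          rw [hX, Matrix.transpose_mul, hBsym, Matrix.transpose_transpose]
        have hBXt : B * Xᵀ = C := by rw [hXt, ← Matrix.mul_assoc, hBB, Matrix.one_mul]
        simp only [Matrix.one_mul, Matrix.mul_one, Matrix.zero_mul, Matrix.mul_zero,
          add_zero, zero_add, Matrix.transpose_one, Matrix.transpose_zero,
          hXB, hBXt, matrix_add_self, ← hS]
      -- symmetry and zero diagonal of S
      have hXt : Xᵀ = B * C := by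
        rw [hX, Matrix.transpose_mul, hBsym, Matrix.transpose_transpose]
      have hSsym : Sᵀ = S := by
        have hXC : (X * C)ᵀ = X * C := by
          rw [Matrix.transpose_mul, hXt, hX, Matrix.mul_assoc]
        rw [hS, Matrix.transpose_add, hXC, hE]
      have hSdiag : ∀ k, S k k = 0 := by
        intro k
        have h1 : (X * C) k k = 0 := by
          rw [hX, Matrix.mul_assoc, Matrix.mul_apply, Fin.sum_univ_two,
            Matrix.mul_apply, Matrix.mul_apply, Fin.sum_univ_two, Fin.sum_univ_two, hB]
          have e00 : (!![(0:ZMod 2),1;1,0]) 0 0 = 0 := by decide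
          have e01 : (!![(0:ZMod 2),1;1,0]) 0 1 = 1 := by decide
          have e10 : (!![(0:ZMod 2),1;1,0]) 1 0 = 1 := by decide
          have e11 : (!![(0:ZMod 2),1;1,0]) 1 1 = 0 := by decide
          rw [e00, e01, e10, e11, Matrix.transpose_apply, Matrix.transpose_apply,
            zero_mul, one_mul, zero_add, one_mul, zero_mul, add_zero, mul_comm]
          exact zmod2_add_self _
        have h2 : E k k = 0 := hA'diag (Sum.inr k)
        rw [hS, Matrix.add_apply, h1, h2, add_zero]
      -- rank computation
      have hrank : A.rank = 2 + S.rank := by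
        have h1 : (P * A' * Pᵀ).rank = A'.rank := by
          rw [Matrix.rank_mul_eq_left_of_isUnit_det Pᵀ (P * A')
              (by rwa [Matrix.det_transpose]),
            Matrix.rank_mul_eq_right_of_isUnit_det P A' hPdet]
        rw [hdecomp, rank_fromBlocks_diag] at h1
        rw [← hrankA', ← h1, Matrix.rank_of_isUnit B hunitB, Fintype.card_fin]
      have hcs : Fintype.card s ≤ n := by omega
      have hSeven := ih s hcs S hSsym hSdiag
      rw [hrank]
      exact even_two.add hSeven

lemma even_rank_alt' {ι : Type u} [Fintype ι] [DecidableEq ι] (A : Matrix ι ι (ZMod 2))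
    (hsym : Aᵀ = A) (hdiag : ∀ i, A i i = 0) : Even A.rank :=
  even_rank_alt (Fintype.card ι) ι le_rfl A hsym hdiag



/-- The GF(2)-nullity of the principal submatrix of `A` indexed by `T`. -/
noncomputable def nullityOn {V : Type*} [Fintype V] [DecidableEq V]
    (A : Matrix V V (ZMod 2)) (T : Finset V) : ℕ :=
  T.card - (A.submatrix (fun i : {x // x ∈ T} => (i : V)) (fun i : {x // x ∈ T} => (i : V))).rank

/-- The interlace polynomial `q_N(G;x) = ∑_{T ⊆ V(G)} (x-1)^{n(G[T])}`,
evaluated at the integer `x`. -/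
noncomputable def interlace {V : Type*} [Fintype V] [DecidableEq V]
    (G : SimpleGraph V) [DecidableRel G.Adj] (x : ℤ) : ℤ :=
  ∑ T : Finset V, (x - 1) ^ nullityOn (G.adjMatrix (ZMod 2)) T

/-- For any simple graph `G` with at least one vertex, `q_N(G;0) = 0`. -/
theorem interlace_eval_zero {V : Type*} [Fintype V] [DecidableEq V]
    (G : SimpleGraph V) [DecidableRel G.Adj] (h : 1 ≤ Fintype.card V) :
    interlace G 0 = 0 := by
  classical
  have key : ∀ T : Finset V,
      ((0 : ℤ) - 1) ^ nullityOn (G.adjMatrix (ZMod 2)) T = (-1 : ℤ) ^ T.card := by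
    intro T
    set f : {x // x ∈ T} → V := fun i => (i : V) with hf
    set M := (G.adjMatrix (ZMod 2)).submatrix f f with hM
    have hsym : Mᵀ = M := by
      rw [hM, Matrix.transpose_submatrix, SimpleGraph.transpose_adjMatrix]
    have hdiag : ∀ i, M i i = 0 := by
      intro i
      simp [hM, Matrix.submatrix_apply]
    have heven : Even M.rank := even_rank_alt' M hsym hdiag
    have hle : M.rank ≤ T.card := by
      have := M.rank_le_card_width
      rwa [Fintype.card_coe] at this
    have hnull : nullityOn (G.adjMatrix (ZMod 2)) T = T.card - M.rank := rfl
    have hpow : ((-1 : ℤ)) ^ (T.card - M.rank) = (-1 : ℤ) ^ T.card := by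
      have h2 : ((-1 : ℤ)) ^ (T.card - M.rank) * (-1) ^ M.rank = (-1) ^ T.card := by
        rw [← pow_add, Nat.sub_add_cancel hle]
      rwa [heven.neg_one_pow, mul_one] at h2
    rw [hnull, show ((0:ℤ) - 1) = -1 by ring, hpow]
  rw [interlace]
  rw [Finset.sum_congr rfl (fun T _ => key T)]
  have huniv : (Finset.univ : Finset (Finset V)) = (Finset.univ : Finset V).powerset := by
    rw [Finset.powerset_univ]
  rw [huniv]
  exact Finset.sum_powerset_neg_one_pow_card_of_nonempty
    (Finset.card_pos.mp (lt_of_lt_of_le zero_lt_one h))
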